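/- Let Γ ∈ (1,2], D > 0, m ∈ ℝ^d, and E > √(D² + |m|²). Define Φ : [0,∞) → ℝ by Φ(p) = |m|²/(E+p) + D·√(1 − |m|²/(E+p)²) + p/(Γ−1) − E. Then there exists a unique p* ∈ (0,∞) with Φ(p*) = 0. -/

import Mathlib

set_option maxHeartbeats 1600000 in
/-- For Γ ∈ (1,2], D > 0, m ∈ ℝ^d and E > √(D² + ‖m‖²), the
pressure equation Φ(p) = ‖m‖²/(E+p) + D√(1 − ‖m‖²/(E+p)²) + p/(Γ−1) − E = 0
has a unique positive solution. -/
theorem pressure_equation_unique_positive_root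
    (d : ℕ) (hd : 0 < d) (Γ D E : ℝ) (m : EuclideanSpace ℝ (Fin d))
    (hΓ1 : 1 < Γ) (hΓ2 : Γ ≤ 2) (hD : 0 < D)
    (hE : Real.sqrt (D ^ 2 + ‖m‖ ^ 2) < E) :
    ∃! pstar : ℝ, 0 < pstar ∧
      ‖m‖ ^ 2 / (E + pstar) + D * Real.sqrt (1 - ‖m‖ ^ 2 / (E + pstar) ^ 2)
        + pstar / (Γ - 1) - E = 0 := by
  set n : ℝ := ‖m‖ with hn
  have hn0 : 0 ≤ n := norm_nonneg m
  have hE0 : 0 < E := lt_of_le_of_lt (Real.sqrt_nonneg _) hE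
  have hsq : D ^ 2 + n ^ 2 < E ^ 2 := (Real.sqrt_lt' hE0).mp hE
  have hΓ : 0 < Γ - 1 := by linarith
  set Φ : ℝ → ℝ := fun p =>
    n ^ 2 / (E + p) + D * Real.sqrt (1 - n ^ 2 / (E + p) ^ 2) + p / (Γ - 1) - E
    with hΦ
  -- strict monotonicity on [0, ∞)
  have hmono : ∀ p q : ℝ, 0 ≤ p → p < q → Φ p < Φ q := by
    intro p q hp hpq
    have hq : 0 ≤ q := le_of_lt (lt_of_le_of_lt hp hpq)
    have hEp : 0 < E + p := by linarith
    have hEq : 0 < E + q := by linarith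
    have hsqrt : Real.sqrt (1 - n ^ 2 / (E + p) ^ 2)
        ≤ Real.sqrt (1 - n ^ 2 / (E + q) ^ 2) := by
      apply Real.sqrt_le_sqrt
      have h1 : n ^ 2 / (E + q) ^ 2 ≤ n ^ 2 / (E + p) ^ 2 :=
        div_le_div_of_nonneg_left (by positivity) (by positivity) (by nlinarith)
      linarith
    have hD1 : D * Real.sqrt (1 - n ^ 2 / (E + p) ^ 2)
        ≤ D * Real.sqrt (1 - n ^ 2 / (E + q) ^ 2) :=
      mul_le_mul_of_nonneg_left hsqrt hD.le
    have h1 : n ^ 2 / (E + p) - n ^ 2 / (E + q)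
        = n ^ 2 * (q - p) / ((E + p) * (E + q)) := by
      field_simp
      ring
    have h2 : n ^ 2 * (q - p) / ((E + p) * (E + q)) < q - p := by
      have hprod : n ^ 2 < (E + p) * (E + q) := by nlinarith [sq_nonneg D]
      rw [div_lt_iff₀ (by positivity)]
      nlinarith [mul_lt_mul_of_pos_right hprod (sub_pos.mpr hpq)]
    have h3 : q - p ≤ q / (Γ - 1) - p / (Γ - 1) := by
      rw [div_sub_div_same, le_div_iff₀ hΓ]
      nlinarith
    simp only [hΦ]
    linarith
  -- Φ 0 < 0
  set A : ℝ := Real.sqrt (E ^ 2 - n ^ 2) with hA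
  have hA2 : A ^ 2 = E ^ 2 - n ^ 2 := Real.sq_sqrt (by nlinarith)
  have hA0 : 0 ≤ A := Real.sqrt_nonneg _
  have hDA : D < A := by nlinarith
  have hval : Real.sqrt (1 - n ^ 2 / (E + 0) ^ 2) = A / E := by
    have h : 1 - n ^ 2 / (E + 0) ^ 2 = (A / E) ^ 2 := by
      rw [div_pow, hA2]
      field_simp
      ring
    rw [h, Real.sqrt_sq (by positivity)]
  have hΦ0 : Φ 0 < 0 := by
    simp only [hΦ, hval]
    rw [add_zero, zero_div, add_zero, ← mul_div_assoc, ← add_div,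
      sub_neg, div_lt_iff₀ hE0]
    nlinarith
  -- Φ M ≥ 0
  obtain ⟨M, hM⟩ : ∃ M : ℝ, M = (Γ - 1) * E + 1 := ⟨_, rfl⟩
  have hM0 : 0 < M := by rw [hM]; nlinarith
  have hΦM : 0 ≤ Φ M := by
    have h1 : 0 ≤ n ^ 2 / (E + M) := by positivity
    have h2 : 0 ≤ D * Real.sqrt (1 - n ^ 2 / (E + M) ^ 2) := by positivity
    have h3 : E < M / (Γ - 1) := by
      rw [lt_div_iff₀ hΓ, hM]
      nlinarith
    simp only [hΦ]
    linarith
  -- continuity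
  have hcont : ContinuousOn Φ (Set.Icc 0 M) := by
    have hne : ∀ x ∈ Set.Icc (0 : ℝ) M, E + x ≠ 0 := by
      intro x hx
      have := hx.1
      positivity
    apply ContinuousOn.sub _ continuousOn_const
    apply ContinuousOn.add
    apply ContinuousOn.add
    · exact continuousOn_const.div (continuousOn_const.add continuousOn_id) hne
    · apply continuousOn_const.mul
      apply Real.continuous_sqrt.comp_continuousOn
      apply continuousOn_const.sub
      apply continuousOn_const.div
      · exact ((continuousOn_const.add continuousOn_id).pow 2)
      · intro x hx
        exact pow_ne_zero 2 (hne x hx)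
    · exact (continuousOn_id.div continuousOn_const (fun x _ => hΓ.ne'))
  obtain ⟨c, hcmem, hc⟩ : ∃ c ∈ Set.Icc (0 : ℝ) M, Φ c = 0 := by
    have := intermediate_value_Icc hM0.le hcont
    have h0 : (0 : ℝ) ∈ Set.Icc (Φ 0) (Φ M) := ⟨hΦ0.le, hΦM⟩
    obtain ⟨c, hcm, hcv⟩ := this h0
    exact ⟨c, hcm, hcv⟩
  have hcpos : 0 < c := by
    rcases lt_or_eq_of_le hcmem.1 with h | h
    · exact h
    · exfalso; rw [← h] at hc; linarith
  refine ⟨c, ⟨hcpos, hc⟩, ?_⟩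
  intro y ⟨hy, hΦy⟩
  have hΦy' : Φ y = 0 := hΦy
  rcases lt_trichotomy y c with h | h | h
  · have := hmono y c hy.le h; rw [hc, hΦy'] at this; linarith
  · exact h
  · have := hmono c y hcpos.le h; rw [hc, hΦy'] at this; linarith
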